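/- Let q ≥ 1, and for each j ∈ {1,...,q} let ρ₊ʲ, ρ₋ʲ ∈ [0,1) with ρ₊ʲ + ρ₋ʲ < 1. Let φ : ℝ → ℝ be any bounded function, and define for y ∈ {+1,-1} and t ∈ ℝ the modified loss φ̃ⱼ(y, t) = ((1 - ρ_{-y}ʲ)·φ(y·t) - ρ_yʲ·φ(-y·t)) / (1 - ρ₊ʲ - ρ₋ʲ). Suppose each noisy label ỹⱼ equals yⱼ with probability 1 - ρ_{yⱼ}ʲ and -yⱼ with probability ρ_{yⱼ}ʲ, independently across j. Then E_{ỹ}[ Σ_{j=1}^q φ̃ⱼ(ỹⱼ, fⱼ) ] = Σ_{j=1}^q φ(yⱼ·fⱼ) for any f ∈ ℝ^q and y ∈ {+1,-1}^q. -/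
import Mathlib


theorem stmt_1 (q : ℕ) (hq : 1 ≤ q) (ρp ρm : Fin q → ℝ)
    (hp0 : ∀ j, 0 ≤ ρp j) (hp1 : ∀ j, ρp j < 1) (hm0 : ∀ j, 0 ≤ ρm j) (hm1 : ∀ j, ρm j < 1)
    (hsum : ∀ j, ρp j + ρm j < 1) (φ : ℝ → ℝ) (Θ : ℝ) (hbdd : ∀ t, |φ t| ≤ Θ)
    (f y : Fin q → ℝ) (hy : ∀ j, y j = 1 ∨ y j = -1) :
    let ρ : ℝ → Fin q → ℝ := fun s j => if s = 1 then ρp j else ρm j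
    let φt : Fin q → ℝ → ℝ → ℝ := fun j s u =>
      ((1 - ρ (-s) j) * φ (s * u) - ρ s j * φ (-(s * u))) / (1 - ρp j - ρm j)
    ∑ ε : Fin q → Bool,
        (∏ j, (if ε j then ρ (y j) j else 1 - ρ (y j) j)) *
          (∑ j, φt j (if ε j then -(y j) else y j) (f j))
      = ∑ j, φ (y j * f j) := by
  intro ρ φt
  classical
  set w : Fin q → Bool → ℝ := fun j b => if b then ρ (y j) j else 1 - ρ (y j) j with hw
  set g : Fin q → Bool → ℝ := fun j b => φt j (if b then -(y j) else y j) (f j) with hg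
  have hw1 : ∀ k, w k true + w k false = 1 := by
    intro k; simp [hw]
  have key : ∀ j, ∑ b : Bool, w j b * g j b = φ (y j * f j) := by
    intro j
    have hd : 1 - ρp j - ρm j ≠ 0 := by nlinarith [hsum j]
    rcases hy j with h | h <;> rw [Fintype.sum_bool] <;>
      simp only [hw, hg, φt, ρ, h, if_true, if_false] <;> norm_num <;>
      field_simp <;> ring
  calc ∑ ε : Fin q → Bool, (∏ j, w j (ε j)) * (∑ j, g j (ε j))
      = ∑ ε : Fin q → Bool, ∑ j, (∏ k, w k (ε k)) * g j (ε j) := by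
        simp [Finset.mul_sum]
    _ = ∑ j, ∑ ε : Fin q → Bool, (∏ k, w k (ε k)) * g j (ε j) := Finset.sum_comm
    _ = ∑ j, ∑ ε : Fin q → Bool, ∏ k, (w k (ε k) * if k = j then g j (ε k) else 1) := by
        refine Finset.sum_congr rfl fun j _ => Finset.sum_congr rfl fun ε _ => ?_
        rw [Finset.prod_mul_distrib, Finset.prod_ite_eq' Finset.univ j
          (fun k => g j (ε k))]
        simp
    _ = ∑ j, ∏ k, ∑ b : Bool, (w k b * if k = j then g j b else 1) := by
        refine Finset.sum_congr rfl fun j _ => ?_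
        exact (Fintype.prod_sum fun k b => w k b * if k = j then g j b else 1).symm
    _ = ∑ j, ∑ b : Bool, w j b * g j b := by
        refine Finset.sum_congr rfl fun j _ => ?_
        rw [Finset.prod_eq_single j]
        · simp
        · intro k _ hk; rw [Fintype.sum_bool]; simp [hk]; simpa using hw1 k
        · simp
    _ = ∑ j, φ (y j * f j) := Finset.sum_congr rfl fun j _ => key j
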